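/- Let $\Delta \subseteq \mathbb{R}^n$ be a convex body with positive volume and let $(\Delta_\tau)_{\tau \leq \tau^+}$ be an Okounkov test curve relative to $\Delta$. Define the Legendre transform $G[\Delta_\bullet] : \Delta \to [-\infty, \infty)$ by $G[\Delta_\bullet](a) := \sup\{\tau < \tau^+ : a \in \Delta_\tau\}$ (with $\sup \emptyset = -\infty$). Then $G[\Delta_\bullet]$ is concave, finite on the interior of $\Delta$, and upper semicontinuous on $\Delta$, and for every $\tau \leq \tau^+$ one has $\{a \in \Delta : G[\Delta_\bullet](a) \geq \tau\} = \Delta_\tau$. -/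

import Mathlib

open Filter MeasureTheory Metric
open scoped Pointwise

-- helper: r ≤ z if r - ε ≤ z for all ε > 0
lemma EReal_le_of_forall_sub {r : ℝ} {z : EReal}
    (h : ∀ ε : ℝ, 0 < ε → ((r - ε : ℝ) : EReal) ≤ z) : (r : EReal) ≤ z := by
  by_contra hc
  push_neg at hc
  obtain ⟨w, hw1, hw2⟩ := EReal.lt_iff_exists_real_btwn.1 hc
  have := h (r - w) (by exact_mod_cast sub_pos.2 (by exact_mod_cast hw2))
  simp only [sub_sub_cancel] at this
  exact absurd (lt_of_lt_of_le hw1 this) (lt_irrefl _)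

-- separation lemma
lemma mem_of_hausdorff_small {n : ℕ} {K C : Set (EuclideanSpace ℝ (Fin n))}
    (hKc : IsCompact K) (hKne : K.Nonempty) (hKconv : Convex ℝ K)
    (hCb : Bornology.IsBounded C) {a : EuclideanSpace ℝ (Fin n)} {r : ℝ} (hr : 0 < r)
    (hball : ball a r ⊆ C) (hd : hausdorffDist K C < r / 2) : a ∈ K := by
  by_contra ha
  obtain ⟨p, hp, hdp⟩ := hKc.exists_infDist_eq_dist hKne a
  have hap : a ≠ p := fun h => ha (h ▸ hp)
  have hnorm : (0:ℝ) < ‖a - p‖ := by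
    simpa [sub_eq_zero] using hap
  set u : EuclideanSpace ℝ (Fin n) := ‖a - p‖⁻¹ • (a - p) with hu
  have hun : ‖u‖ = 1 := by
    rw [hu, norm_smul, norm_inv, norm_norm, inv_mul_cancel₀ hnorm.ne']
  have hobtuse : ∀ x ∈ K, inner ℝ (a - p) (x - p) ≤ (0:ℝ) := by
    have heq : ‖a - p‖ = ⨅ w : K, ‖a - (w:EuclideanSpace ℝ (Fin n))‖ := by
      rw [← dist_eq_norm, ← hdp, infDist_eq_iInf]
      simp [dist_eq_norm]
    exact (norm_eq_iInf_iff_real_inner_le_zero hKconv hp).1 heq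
  set b := a + (r/2) • u with hb
  have hbC : b ∈ C := hball (by
    simp only [hb, mem_ball, dist_self_add_left, norm_smul, hun, Real.norm_eq_abs,
      abs_of_pos (half_pos hr), mul_one]
    linarith)
  have hdist : ∀ x ∈ K, r/2 ≤ dist b x := by
    intro x hx
    have h1 : inner ℝ (b - x) u ≤ ‖b - x‖ * ‖u‖ := real_inner_le_norm _ _
    have h2 : (r/2 : ℝ) ≤ inner ℝ (b - x) u := by
      have hbx : b - x = (a - p) + (r/2) • u + (p - x) := by
        rw [hb]; abel
      rw [hbx, inner_add_left, inner_add_left, real_inner_smul_left,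
        real_inner_self_eq_norm_sq]
      have e1 : inner ℝ (a - p) u = ‖a - p‖ := by
        rw [hu, real_inner_smul_right, real_inner_self_eq_norm_sq]
        field_simp
      have e2 : inner ℝ (p - x) u = -(‖a - p‖⁻¹ * inner ℝ (a - p) (x - p)) := by
        rw [hu, real_inner_smul_right]
        have : (p - x : EuclideanSpace ℝ (Fin n)) = -(x - p) := by abel
        rw [this, inner_neg_left, real_inner_comm]
        ring
      rw [e1, e2, hun]
      have h3 := hobtuse x hx
      have h4 : 0 ≤ -(‖a - p‖⁻¹ * inner ℝ (a - p) (x - p)) := by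
        have : (0:ℝ) ≤ ‖a - p‖⁻¹ := inv_nonneg.2 hnorm.le
        nlinarith
      nlinarith
    rw [hun, mul_one] at h1
    rw [dist_eq_norm]
    linarith
  have hinf : r/2 ≤ infDist b K := by
    rw [infDist_eq_iInf]
    haveI : Nonempty K := hKne.to_subtype
    exact le_ciInf fun x => hdist x x.2
  have hne : EMetric.hausdorffEdist C K ≠ ⊤ :=
    hausdorffEdist_ne_top_of_nonempty_of_bounded ⟨b, hbC⟩ hKne hCb hKc.isBounded
  have := infDist_le_hausdorffDist_of_mem hbC hne
  rw [hausdorffDist_comm] at hd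
  linarith


/-- The Legendre transform of an Okounkov test curve:
`G[Δ_•](a) = sup {τ < τ⁺ : a ∈ Δ_τ}`, with `sup ∅ = -∞`, valued in `EReal`. -/
noncomputable def legendre {n : ℕ} (Δ : ℝ → Set (EuclideanSpace ℝ (Fin n))) (τp : ℝ)
    (a : EuclideanSpace ℝ (Fin n)) : EReal :=
  sSup ((fun τ : ℝ => (τ : EReal)) '' {τ : ℝ | τ < τp ∧ a ∈ Δ τ})

theorem stmt13 {n : ℕ} (Δlim : Set (EuclideanSpace ℝ (Fin n))) (τp : ℝ)
    (Δ : ℝ → Set (EuclideanSpace ℝ (Fin n)))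
    (hΔne : Δlim.Nonempty) (hΔc : IsCompact Δlim) (hΔconv : Convex ℝ Δlim)
    (hΔvol : 0 < volume Δlim)
    (hbody : ∀ τ ≤ τp, (Δ τ).Nonempty ∧ IsCompact (Δ τ) ∧ Convex ℝ (Δ τ))
    (hdec : ∀ σ τ : ℝ, σ ≤ τ → τ ≤ τp → Δ τ ⊆ Δ σ)
    (hlim : Tendsto (fun τ => hausdorffDist (Δ τ) Δlim) atBot (nhds 0))
    (hconc : ∀ τ ≤ τp, ∀ τ' ≤ τp, ∀ t : ℝ, 0 ≤ t → t ≤ 1 →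
        t • Δ τ + (1 - t) • Δ τ' ⊆ Δ (t * τ + (1 - t) * τ'))
    (htp : Δ τp = ⋂ (τ : ℝ) (_ : τ < τp), Δ τ) :
    (∀ a ∈ Δlim, ∀ b ∈ Δlim, ∀ t : ℝ, 0 ≤ t → t ≤ 1 →
        (t : EReal) * legendre Δ τp a + ((1 - t : ℝ) : EReal) * legendre Δ τp b
          ≤ legendre Δ τp (t • a + (1 - t) • b)) ∧
    (∀ a ∈ interior Δlim, ⊥ < legendre Δ τp a) ∧
    UpperSemicontinuousOn (legendre Δ τp) Δlim ∧
    (∀ τ : ℝ, τ ≤ τp → {a ∈ Δlim | (τ : EReal) ≤ legendre Δ τp a} = Δ τ) := by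
  -- basic facts about legendre
  have hle1 : ∀ (a) (τ : ℝ), τ < τp → a ∈ Δ τ → (τ : EReal) ≤ legendre Δ τp a :=
    fun a τ h1 h2 => le_sSup ⟨τ, ⟨h1, h2⟩, rfl⟩
  have hle2 : ∀ a, legendre Δ τp a ≤ (τp : EReal) := by
    intro a
    refine sSup_le ?_
    rintro x ⟨τ, ⟨h1, _⟩, rfl⟩
    exact EReal.coe_le_coe_iff.2 h1.le
  have hmem_of_lt : ∀ (a) (τ : ℝ), τ < τp → (τ : EReal) < legendre Δ τp a → a ∈ Δ τ := by
    intro a τ h1 h2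
    obtain ⟨x, ⟨σ, ⟨hσ1, hσ2⟩, rfl⟩, hx⟩ := lt_sSup_iff.1 h2
    have : τ ≤ σ := EReal.coe_le_coe_iff.1 hx.le
    exact hdec τ σ this hσ1.le hσ2
  -- Δ τ ⊆ Δlim
  have hsub : ∀ τ ≤ τp, Δ τ ⊆ Δlim := by
    intro τ hτ x hx
    have h0 : ∀ ε : ℝ, 0 < ε → infDist x Δlim ≤ ε := by
      intro ε hε
      have := hlim.eventually (eventually_le_nhds hε)
      obtain ⟨σ0, hσ0⟩ := (Filter.eventually_atBot).1 this
      set σ := min σ0 τ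
      have hσd : hausdorffDist (Δ σ) Δlim ≤ ε := hσ0 σ (min_le_left _ _)
      have hxσ : x ∈ Δ σ := hdec σ τ (min_le_right _ _) hτ hx
      have hne : EMetric.hausdorffEdist (Δ σ) Δlim ≠ ⊤ := by
        obtain ⟨h1, h2, _⟩ := hbody σ (le_trans (min_le_right _ _) hτ)
        exact hausdorffEdist_ne_top_of_nonempty_of_bounded h1 hΔne h2.isBounded hΔc.isBounded
      exact le_trans (infDist_le_hausdorffDist_of_mem hxσ hne) hσd
    have h1 : infDist x Δlim ≤ 0 := le_of_forall_pos_le_add (by intro ε hε; simpa using h0 ε hε)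
    have h2 : infDist x Δlim = 0 := le_antisymm h1 infDist_nonneg
    exact (hΔc.isClosed.mem_iff_infDist_zero hΔne).2 h2
  -- lemma A : closedness from below
  have hclosed : ∀ s ≤ τp, ∀ a, (∀ σ, σ < s → a ∈ Δ σ) → a ∈ Δ s := by
    intro s hs a ha
    rcases eq_or_lt_of_le hs with rfl | hslt
    · rw [htp]; exact Set.mem_iInter₂.2 fun σ hσ => ha σ hσ
    · obtain ⟨⟨b, hbmem⟩, hcpt, _⟩ := hbody τp le_rfl
      have hclosed' : IsClosed (Δ s) := (hbody s hs).2.1.isClosed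
      rw [← hclosed'.closure_eq]
      rw [Metric.mem_closure_iff]
      intro ε hε
      -- choose t small
      set t : ℝ := min (1/2) (ε / (2 * (dist a b + 1))) with ht
      have hdnn : (0:ℝ) < dist a b + 1 := by positivity
      have ht0 : 0 < t := lt_min (by norm_num) (by positivity)
      have ht1 : t < 1 := lt_of_le_of_lt (min_le_left _ _) (by norm_num)
      set σ := (s - t * τp) / (1 - t) with hσ
      have h1t : (0:ℝ) < 1 - t := by linarith
      have hσs : σ < s := by
        rw [hσ, div_lt_iff₀ h1t]
        nlinarith
      have haσ : a ∈ Δ σ := ha σ hσs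
      have hcomb := hconc τp le_rfl σ (le_of_lt (lt_of_lt_of_le hσs hs)) t ht0.le ht1.le
      have hmem : t • b + (1 - t) • a ∈ Δ (t * τp + (1 - t) * σ) :=
        hcomb (Set.add_mem_add (Set.smul_mem_smul_set hbmem) (Set.smul_mem_smul_set haσ))
      have heq : t * τp + (1 - t) * σ = s := by
        rw [hσ]; field_simp; ring
      rw [heq] at hmem
      refine ⟨t • b + (1 - t) • a, hmem, ?_⟩
      have : a - (t • b + (1 - t) • a) = t • (a - b) := by
        rw [smul_sub, sub_smul, one_smul]; abel
      rw [dist_eq_norm, this, norm_smul, Real.norm_eq_abs, abs_of_pos ht0, ← dist_eq_norm]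
      have htε : t ≤ ε / (2 * (dist a b + 1)) := min_le_right _ _
      have : t * dist a b ≤ ε / (2 * (dist a b + 1)) * (dist a b + 1) := by
        apply mul_le_mul htε (by linarith) dist_nonneg (by positivity)
      calc t * dist a b ≤ ε / (2 * (dist a b + 1)) * (dist a b + 1) := this
        _ = ε / 2 := by field_simp
        _ < ε := by linarith
  -- part 4: level sets
  have part4 : ∀ τ : ℝ, τ ≤ τp → {a ∈ Δlim | (τ : EReal) ≤ legendre Δ τp a} = Δ τ := by
    intro τ hτ
    ext a
    constructor
    · rintro ⟨haΔ, hale⟩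
      refine hclosed τ hτ a fun σ hσ => ?_
      have : (σ : EReal) < legendre Δ τp a := lt_of_lt_of_le (by exact_mod_cast hσ) hale
      exact hmem_of_lt a σ (lt_of_lt_of_le hσ hτ) this
    · intro ha
      refine ⟨hsub τ hτ ha, ?_⟩
      rcases eq_or_lt_of_le hτ with rfl | hlt
      · apply EReal_le_of_forall_sub
        intro ε hε
        have hm : a ∈ Δ (τ - ε) := by
          rw [htp] at ha
          exact Set.mem_iInter₂.1 ha (τ - ε) (by linarith)
        exact hle1 a (τ - ε) (by linarith) hm
      · exact hle1 a τ hlt ha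
  refine ⟨?_, ?_, ?_, part4⟩
  · -- concavity
    intro a ha b hb t ht0 ht1
    rcases eq_or_lt_of_le ht0 with rfl | ht0'
    · simp only [EReal.coe_zero, zero_mul, sub_zero, EReal.coe_one, one_mul, zero_add,
        zero_smul, one_smul]
      norm_num
    rcases eq_or_lt_of_le ht1 with rfl | ht1'
    · simp only [EReal.coe_one, one_mul, sub_self, EReal.coe_zero, zero_mul, add_zero,
        one_smul, zero_smul]
      norm_num
    -- 0 < t < 1
    have hct : (0:EReal) < (t:EReal) := by exact_mod_cast ht0'
    have hct1 : (0:EReal) < ((1-t:ℝ):EReal) := by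
      have : (0:ℝ) < 1 - t := by linarith
      exact_mod_cast this
    by_cases hga : legendre Δ τp a = ⊥
    · rw [hga, EReal.mul_bot_of_pos hct, EReal.bot_add]
      exact bot_le
    by_cases hgb : legendre Δ τp b = ⊥
    · rw [hgb, EReal.mul_bot_of_pos hct1, EReal.add_bot]
      exact bot_le
    have hgat : legendre Δ τp a ≠ ⊤ := fun h => by
      have := hle2 a; rw [h] at this; exact absurd this (by simp)
    have hgbt : legendre Δ τp b ≠ ⊤ := fun h => by
      have := hle2 b; rw [h] at this; exact absurd this (by simp)
    set ga := (legendre Δ τp a).toReal with hgar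
    set gb := (legendre Δ τp b).toReal with hgbr
    have hgaa : (ga : EReal) = legendre Δ τp a := EReal.coe_toReal hgat hga
    have hgbb : (gb : EReal) = legendre Δ τp b := EReal.coe_toReal hgbt hgb
    have hgap : ga ≤ τp := by
      have := hle2 a; rw [← hgaa] at this; exact_mod_cast this
    have hgbp : gb ≤ τp := by
      have := hle2 b; rw [← hgbb] at this; exact_mod_cast this
    rw [← hgaa, ← hgbb, ← EReal.coe_mul, ← EReal.coe_mul, ← EReal.coe_add]
    apply EReal_le_of_forall_sub
    intro ε hε
    have hmema : a ∈ Δ (ga - ε) := by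
      apply hmem_of_lt a _ (by linarith)
      rw [← hgaa]; exact_mod_cast (by linarith : ga - ε < ga)
    have hmemb : b ∈ Δ (gb - ε) := by
      apply hmem_of_lt b _ (by linarith)
      rw [← hgbb]; exact_mod_cast (by linarith : gb - ε < gb)
    have hcomb := hconc (ga - ε) (by linarith) (gb - ε) (by linarith) t ht0 ht1
    have hmem : t • a + (1 - t) • b ∈ Δ (t * (ga - ε) + (1 - t) * (gb - ε)) :=
      hcomb (Set.add_mem_add (Set.smul_mem_smul_set hmema) (Set.smul_mem_smul_set hmemb))
    have hlt : t * (ga - ε) + (1 - t) * (gb - ε) < τp := by nlinarith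
    have := hle1 _ _ hlt hmem
    refine le_trans (le_of_eq ?_) this
    norm_cast
    ring
  · -- finite on interior
    intro a ha
    obtain ⟨r, hr, hball⟩ : ∃ r > 0, ball a r ⊆ Δlim := by
      rcases Metric.mem_nhds_iff.1 (mem_interior_iff_mem_nhds.1 ha) with ⟨r, hr, h⟩
      exact ⟨r, hr, h⟩
    have := hlim.eventually (eventually_lt_nhds (half_pos hr))
    obtain ⟨σ0, hσ0⟩ := (Filter.eventually_atBot).1 this
    set τ := min σ0 (τp - 1) with hτ
    have hτlt : τ < τp := lt_of_le_of_lt (min_le_right _ _) (by linarith)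
    have hdd : hausdorffDist (Δ τ) Δlim < r / 2 := hσ0 τ (min_le_left _ _)
    obtain ⟨h1, h2, h3⟩ := hbody τ hτlt.le
    have haτ : a ∈ Δ τ := mem_of_hausdorff_small h2 h1 h3 hΔc.isBounded hr hball hdd
    exact lt_of_lt_of_le (by exact EReal.bot_lt_coe τ) (hle1 a τ hτlt haτ)
  · -- upper semicontinuity
    intro a ha y hy
    rcases EReal.lt_iff_exists_real_btwn.1 hy with ⟨τ, hτ1, hτ2⟩
    by_cases hττp : τ ≤ τp
    · have hanot : a ∉ Δ τ := by
        intro hmem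
        rw [← part4 τ hττp] at hmem
        exact absurd (lt_of_lt_of_le hτ1 hmem.2) (lt_irrefl _)
      have hopen : IsOpen (Δ τ)ᶜ := (hbody τ hττp).2.1.isClosed.isOpen_compl
      filter_upwards [nhdsWithin_le_nhds (hopen.mem_nhds hanot), self_mem_nhdsWithin]
        with x hx hxlim
      by_contra hc
      push_neg at hc
      have : (τ:EReal) ≤ legendre Δ τp x := le_trans hτ2.le hc
      exact hx ((part4 τ hττp ▸ (⟨hxlim, this⟩ : x ∈ {a ∈ Δlim | (τ : EReal) ≤ legendre Δ τp a})))
    · push_neg at hττp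
      filter_upwards [self_mem_nhdsWithin] with x hxlim
      calc legendre Δ τp x ≤ (τp : EReal) := hle2 x
        _ < (τ : EReal) := by exact_mod_cast hττp
        _ < y := hτ2
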